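/- Let M = {(i₀,j₀), (i₀+1,j₀)} be two horizontally adjacent marked vertices on the n×n torus (n ≥ 3), and let U' = S·(I⊗C)·(Q⊗I₅) be the search step, where Q flips the sign of the position amplitudes at marked vertices. Then the state |φ_stat^a⟩ = Σ_{i,j} |i,j⟩|s_cᵃ⟩ − (4+l)a(|i₀,j₀,→⟩ + |i₀+1,j₀,←⟩), where |s_cᵃ⟩ = a(|↑⟩+|↓⟩+|←⟩+|→⟩+√l|↺⟩), satisfies U'|φ_stat^a⟩ = |φ_stat^a⟩ for every real a. -/
import Mathlib


open Matrix

/-- Basis index of the walk space on the `n×n` torus with a 5-dimensional coin: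
position `(i,j) ∈ (ℤ/nℤ)²` and coin `c ∈ Fin 5` with `0=↑, 1=↓, 2=←, 3=→, 4=↺`. -/
abbrev WalkIdx (n : ℕ) := ZMod n × ZMod n × Fin 5

/-- The action of the flip-flop shift with self-loop on basis indices. -/
def shiftIdx (n : ℕ) : WalkIdx n → WalkIdx n
  | (i, j, c) =>
    if c = 0 then (i, j + 1, 1)
    else if c = 1 then (i, j - 1, 0)
    else if c = 2 then (i - 1, j, 3)
    else if c = 3 then (i + 1, j, 2)
    else (i, j, c)

/-- The flip-flop shift operator with self-loop, as a matrix: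
`S|i,j,↑⟩=|i,j+1,↓⟩`, `S|i,j,↓⟩=|i,j−1,↑⟩`, `S|i,j,←⟩=|i−1,j,→⟩`,
`S|i,j,→⟩=|i+1,j,←⟩`, `S|i,j,↺⟩=|i,j,↺⟩` (indices mod `n`). -/
noncomputable def shiftOp (n : ℕ) : Matrix (WalkIdx n) (WalkIdx n) ℂ :=
  fun x y => if x = shiftIdx n y then 1 else 0

/-- The Grover self-loop coin state `|s_c⟩`. -/
noncomputable def scState (l : ℝ) : Fin 5 → ℂ :=
  fun c => if c = 4 then (Real.sqrt l : ℂ) / (Real.sqrt (4 + l) : ℂ)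
           else 1 / (Real.sqrt (4 + l) : ℂ)

/-- The 5-dimensional Grover coin `C = 2|s_c⟩⟨s_c| − I₅`. -/
noncomputable def groverCoin (l : ℝ) : Matrix (Fin 5) (Fin 5) ℂ :=
  (2 : ℂ) • Matrix.vecMulVec (scState l) (star (scState l)) - 1

/-- The coin operator `I ⊗ C` on the full walk space. -/
noncomputable def coinOp (n : ℕ) (l : ℝ) : Matrix (WalkIdx n) (WalkIdx n) ℂ :=
  fun x y => if x.1 = y.1 ∧ x.2.1 = y.2.1 then groverCoin l x.2.2 y.2.2 else 0

/-- One step of the lackadaisical walk (without search): `U = S·(I ⊗ C)`. -/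
noncomputable def walkOp (n : ℕ) [NeZero n] (l : ℝ) : Matrix (WalkIdx n) (WalkIdx n) ℂ :=
  shiftOp n * coinOp n l

/-- The query `Q ⊗ I₅`: flips the sign at the marked vertices `M`. -/
noncomputable def queryOp (n : ℕ) (M : Finset (ZMod n × ZMod n)) :
    Matrix (WalkIdx n) (WalkIdx n) ℂ :=
  fun x y => if x = y then (if (x.1, x.2.1) ∈ M then -1 else 1) else 0

/-- One step of the search walk: `U' = S·(I⊗C)·(Q⊗I₅)`. -/
noncomputable def searchOp (n : ℕ) [NeZero n] (l : ℝ) (M : Finset (ZMod n × ZMod n)) :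
    Matrix (WalkIdx n) (WalkIdx n) ℂ :=
  shiftOp n * coinOp n l * queryOp n M

/-- The uniform initial state `|ψ(0)⟩ = (1/n) Σ_{i,j} |i,j⟩ ⊗ |s_c⟩`. -/
noncomputable def psi0 (n : ℕ) (l : ℝ) : WalkIdx n → ℂ :=
  fun x => (1 / (n : ℂ)) * scState l x.2.2

/-- The coin part `|s_cᵃ⟩ = a(|↑⟩+|↓⟩+|←⟩+|→⟩+√l|↺⟩)` of the stationary state. -/
noncomputable def scA (l a : ℝ) : Fin 5 → ℂ :=
  fun c => (a : ℂ) * (if c = 4 then (Real.sqrt l : ℂ) else 1)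

/-- The stationary state for two horizontally adjacent marked vertices
`(i₀,j₀)` and `(i₀+1,j₀)`:
`|φ_stat^a⟩ = Σ_{i,j} |i,j⟩|s_cᵃ⟩ − (4+l)a(|i₀,j₀,→⟩ + |i₀+1,j₀,←⟩)`. -/
noncomputable def phiStat (n : ℕ) (l a : ℝ) (i₀ j₀ : ZMod n) : WalkIdx n → ℂ :=
  fun x => scA l a x.2.2 -
    (if x = (i₀, j₀, (3 : Fin 5)) ∨ x = (i₀ + 1, j₀, (2 : Fin 5))
     then ((4 + l : ℝ) : ℂ) * (a : ℂ) else 0)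


theorem shiftIdx_shiftIdx (n : ℕ) (x : WalkIdx n) : shiftIdx n (shiftIdx n x) = x := by
  obtain ⟨i, j, c⟩ := x
  fin_cases c <;> simp [shiftIdx]

theorem shiftOp_mulVec (n : ℕ) [NeZero n] (v : WalkIdx n → ℂ) (x : WalkIdx n) :
    (shiftOp n).mulVec v x = v (shiftIdx n x) := by
  have h : ∀ y : WalkIdx n, (x = shiftIdx n y) = (shiftIdx n x = y) := by
    intro y
    apply propext; constructor
    · rintro rfl; exact shiftIdx_shiftIdx n y
    · rintro rfl; exact (shiftIdx_shiftIdx n x).symm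
  simp only [mulVec, dotProduct, shiftOp, h, ite_mul, one_mul, zero_mul,
    Finset.sum_ite_eq, Finset.mem_univ, if_true]

theorem queryOp_mulVec (n : ℕ) [NeZero n] (M : Finset (ZMod n × ZMod n))
    (v : WalkIdx n → ℂ) (x : WalkIdx n) :
    (queryOp n M).mulVec v x = (if (x.1, x.2.1) ∈ M then -1 else 1) * v x := by
  simp only [mulVec, dotProduct, queryOp, ite_mul, zero_mul,
    Finset.sum_ite_eq, Finset.mem_univ, if_true]

theorem coinOp_mulVec (n : ℕ) [NeZero n] (l : ℝ) (v : WalkIdx n → ℂ)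
    (i j : ZMod n) (c : Fin 5) :
    (coinOp n l).mulVec v (i, j, c) = ∑ c' : Fin 5, groverCoin l c c' * v (i, j, c') := by
  simp only [mulVec, dotProduct, coinOp, Fintype.sum_prod_type, ite_and, ite_mul, zero_mul,
    Finset.sum_ite_irrel, Finset.sum_const_zero, Finset.sum_ite_eq, Finset.mem_univ, if_true]

theorem star_scState (l : ℝ) : star (scState l) = scState l := by
  funext c
  simp only [Pi.star_apply, scState]
  split <;> simp [Complex.star_def, map_div₀, Complex.conj_ofReal]

theorem grover_apply (l : ℝ) (w : Fin 5 → ℂ) (c : Fin 5) :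
    ∑ c', groverCoin l c c' * w c' =
      2 * scState l c * (∑ c', scState l c' * w c') - w c := by
  simp only [groverCoin, star_scState, Matrix.sub_apply, Matrix.smul_apply,
    Matrix.vecMulVec_apply, Matrix.one_apply, smul_eq_mul, sub_mul, ite_mul, one_mul, zero_mul]
  rw [Finset.sum_sub_distrib, Finset.sum_ite_eq, Finset.mul_sum]
  simp [mul_assoc, mul_comm, mul_left_comm]

theorem inner_unmarked (l a : ℝ) (hl : 0 < l) :
    ∑ c' : Fin 5, scState l c' * scA l a c' = (a : ℂ) * (Real.sqrt (4 + l) : ℂ) := by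
  have h4l : (0:ℝ) < 4 + l := by linarith
  have hSC : (Real.sqrt (4 + l) : ℂ) ≠ 0 := by
    exact_mod_cast Complex.ofReal_ne_zero.mpr (by positivity)
  have hSS : (Real.sqrt (4 + l) : ℂ) * (Real.sqrt (4 + l) : ℂ) = ((4 + l : ℝ) : ℂ) := by
    rw [← Complex.ofReal_mul, Real.mul_self_sqrt h4l.le]
  have hss : (Real.sqrt l : ℂ) * (Real.sqrt l : ℂ) = ((l : ℝ) : ℂ) := by
    rw [← Complex.ofReal_mul, Real.mul_self_sqrt hl.le]
  simp [Fin.sum_univ_five, scState, scA]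
  field_simp
  push_cast at hSS ⊢
  linear_combination (a : ℂ) * hss - (a : ℂ) * hSS

theorem inner_marked (l a : ℝ) (hl : 0 < l) (c₀ : Fin 5) (hc : c₀ ≠ 4) :
    ∑ c' : Fin 5, scState l c' *
      (scA l a c' - (if c' = c₀ then ((4 + l : ℝ) : ℂ) * (a : ℂ) else 0)) = 0 := by
  have h4l : (0:ℝ) < 4 + l := by linarith
  have hSC : (Real.sqrt (4 + l) : ℂ) ≠ 0 := by
    exact_mod_cast Complex.ofReal_ne_zero.mpr (by positivity)
  have hSS : (Real.sqrt (4 + l) : ℂ) * (Real.sqrt (4 + l) : ℂ) = ((4 + l : ℝ) : ℂ) := by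
    rw [← Complex.ofReal_mul, Real.mul_self_sqrt h4l.le]
  simp only [mul_sub, Finset.sum_sub_distrib, inner_unmarked l a hl, mul_ite, mul_zero,
    Finset.sum_ite_eq', Finset.mem_univ, if_true]
  rw [scState, if_neg hc]
  field_simp
  push_cast at hSS ⊢
  linear_combination (a : ℂ) * hSS

theorem grover_fix_sc (l a : ℝ) (hl : 0 < l) (c : Fin 5) :
    ∑ c' : Fin 5, groverCoin l c c' * scA l a c' = scA l a c := by
  have h4l : (0:ℝ) < 4 + l := by linarith
  have hSC : (Real.sqrt (4 + l) : ℂ) ≠ 0 := by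
    exact_mod_cast Complex.ofReal_ne_zero.mpr (by positivity)
  rw [grover_apply, inner_unmarked l a hl]
  fin_cases c <;> simp [scState, scA] <;> field_simp <;> ring

theorem grover_fix_point (l a : ℝ) (hl : 0 < l) (c₀ c : Fin 5) (hc : c₀ ≠ 4) :
    ∑ c' : Fin 5, groverCoin l c c' *
        (-1 * (scA l a c' - (if c' = c₀ then ((4 + l : ℝ) : ℂ) * (a : ℂ) else 0))) =
      scA l a c - (if c = c₀ then ((4 + l : ℝ) : ℂ) * (a : ℂ) else 0) := by
  rw [grover_apply]
  simp only [neg_one_mul, mul_neg, Finset.sum_neg_distrib]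
  rw [inner_marked l a hl c₀ hc]
  ring

theorem phiStat_shift (n : ℕ) (l a : ℝ) (i₀ j₀ : ZMod n) (x : WalkIdx n) :
    phiStat n l a i₀ j₀ (shiftIdx n x) = phiStat n l a i₀ j₀ x := by
  obtain ⟨i, j, c⟩ := x
  fin_cases c <;>
    simp only [shiftIdx, phiStat, scA] <;>
    norm_num <;>
    congr 1 <;>
    refine if_congr ?_ rfl rfl <;>
    simp [Prod.ext_iff, sub_eq_iff_eq_add]

theorem keyA (n : ℕ) [NeZero n] (hn : 3 ≤ n) (l a : ℝ) (hl : 0 < l)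
    (i₀ j₀ : ZMod n) (x : WalkIdx n) :
    (coinOp n l).mulVec
        ((queryOp n {(i₀, j₀), (i₀ + 1, j₀)}).mulVec (phiStat n l a i₀ j₀)) x =
      phiStat n l a i₀ j₀ x := by
  haveI : Fact (1 < n) := ⟨by omega⟩
  have hne : i₀ ≠ i₀ + 1 := by
    intro h
    have h1 : (1 : ZMod n) = ((1 : ℕ) : ZMod n) := by norm_num
    have := (left_eq_add.mp h)
    rw [h1, ZMod.natCast_eq_zero_iff] at this
    exact absurd (Nat.le_of_dvd one_pos this) (by omega)
  obtain ⟨i, j, c⟩ := x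
  rw [coinOp_mulVec]
  simp only [queryOp_mulVec]
  by_cases hP : (i, j) = (i₀, j₀)
  · obtain ⟨rfl, rfl⟩ := Prod.mk.injEq .. ▸ hP
    have hv : ∀ c' : Fin 5, phiStat n l a i j (i, j, c') =
        scA l a c' - (if c' = 3 then ((4 + l : ℝ) : ℂ) * (a : ℂ) else 0) := by
      intro c'
      simp [phiStat, Prod.ext_iff, hne]
    have hmem : (i, j) ∈ ({(i, j), (i + 1, j)} : Finset (ZMod n × ZMod n)) := by simp
    simp only [hv, hmem, if_true]
    simpa using grover_fix_point l a hl 3 c (by decide)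
  · by_cases hP' : (i, j) = (i₀ + 1, j₀)
    · obtain ⟨rfl, rfl⟩ := Prod.mk.injEq .. ▸ hP'
      have hv : ∀ c' : Fin 5, phiStat n l a i₀ j (i₀ + 1, j, c') =
          scA l a c' - (if c' = 2 then ((4 + l : ℝ) : ℂ) * (a : ℂ) else 0) := by
        intro c'
        simp [phiStat, Prod.ext_iff, hne.symm]
      have hmem : (i₀ + 1, j) ∈ ({(i₀, j), (i₀ + 1, j)} : Finset (ZMod n × ZMod n)) := by
        simp
      simp only [hv, hmem, if_true]
      simpa using grover_fix_point l a hl 2 c (by decide)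
    · have hv : ∀ c' : Fin 5, phiStat n l a i₀ j₀ (i, j, c') = scA l a c' := by
        intro c'
        have h1 : ¬(i = i₀ ∧ j = j₀) := by simpa [Prod.ext_iff] using hP
        have h2 : ¬(i = i₀ + 1 ∧ j = j₀) := by simpa [Prod.ext_iff] using hP'
        have hcond : ¬((i, j, c') = (i₀, j₀, (3 : Fin 5)) ∨
            (i, j, c') = (i₀ + 1, j₀, (2 : Fin 5))) := by
          rintro (h | h) <;> simp [Prod.ext_iff] at h
          · exact h1 ⟨h.1, h.2.1⟩
          · exact h2 ⟨h.1, h.2.1⟩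
        simp only [phiStat]
        rw [if_neg hcond, sub_zero]
      have hmem : (i, j) ∉ ({(i₀, j₀), (i₀ + 1, j₀)} : Finset (ZMod n × ZMod n)) := by
        simp [hP, hP']
      simp only [hv, hmem, if_false, one_mul]
      exact grover_fix_sc l a hl c

/-- Lemma 1: for two horizontally adjacent marked vertices, the stationary state
is fixed by the search step `U' = S·(I⊗C)·(Q⊗I₅)`. -/
theorem phiStat_fixed (n : ℕ) [NeZero n] (hn : 3 ≤ n) (l a : ℝ) (hl : 0 < l)
    (i₀ j₀ : ZMod n) :
    (searchOp n l {(i₀, j₀), (i₀ + 1, j₀)}).mulVec (phiStat n l a i₀ j₀) =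
      phiStat n l a i₀ j₀ := by
  funext x
  rw [searchOp, ← Matrix.mulVec_mulVec, ← Matrix.mulVec_mulVec, shiftOp_mulVec,
    keyA n hn l a hl, phiStat_shift]
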